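/- Let σ, ζ, ℘ be the Weierstrass sigma, zeta and elliptic functions of a lattice 𝓛 ⊂ ℂ. For every k ∈ ℂ not in 𝓛, the function ψ(z,k) = (σ(z+k)/(σ(z)σ(k))) · exp(−ζ(k)z) is a solution of the m = 1 Lamé equation −ψ'' + 2℘(z)ψ = λψ with λ = −℘(k), on any domain avoiding the lattice points; moreover, for every half-period ω (i.e., 2ω ∈ 𝓛) it has the Floquet property ψ(z+2ω, k) = exp(2ηk − 2ζ(k)ω) ψ(z,k), where η = ζ(ω). -/

import Mathlib

open scoped Topology


open Complex Set Filter

noncomputable section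

/-- The period lattice with half-periods `w1`, `w3`, i.e. the set of all
`2 m w1 + 2 n w3` with `m n : ℤ`. -/
def latticeSet (w1 w3 : ℂ) : Set ℂ := {z | ∃ m n : ℤ, z = 2 * m * w1 + 2 * n * w3}

/-- Weierstrass data for a lattice `𝓛` with basic half-periods `w1`, `w3`:
the functions `℘` (denoted `P`), `ζ` (denoted `Z`) and `σ` (denoted `S`),
characterized up to uniqueness by their standard analytic properties:
`℘` is `𝓛`-periodic, holomorphic off `𝓛`, with `℘(z) - 1/z² → 0` as `z → 0`;
`ζ` is odd with `ζ' = -℘`; `σ` is entire, non-vanishing off `𝓛`, with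
`σ'/σ = ζ` and `σ(z)/z → 1` as `z → 0`. -/
structure WeierstrassData where
  w1 : ℂ
  w3 : ℂ
  P : ℂ → ℂ
  Z : ℂ → ℂ
  S : ℂ → ℂ
  w1_ne : w1 ≠ 0
  indep : ∀ r : ℝ, w3 ≠ (r : ℂ) * w1
  P_diff : ∀ z ∉ latticeSet w1 w3, DifferentiableAt ℂ P z
  P_periodic : ∀ w ∈ latticeSet w1 w3, ∀ z, P (z + w) = P z
  P_pole : Tendsto (fun z => P z - 1 / z ^ 2) (nhdsWithin 0 {(0 : ℂ)}ᶜ) (nhds 0)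
  Z_diff : ∀ z ∉ latticeSet w1 w3, DifferentiableAt ℂ Z z
  Z_deriv : ∀ z ∉ latticeSet w1 w3, deriv Z z = -P z
  Z_odd : ∀ z, Z (-z) = -Z z
  S_diff : Differentiable ℂ S
  S_ne : ∀ z ∉ latticeSet w1 w3, S z ≠ 0
  S_deriv : ∀ z ∉ latticeSet w1 w3, deriv S z = Z z * S z
  S_norm : Tendsto (fun z => S z / z) (nhdsWithin 0 {(0 : ℂ)}ᶜ) (nhds 1)

namespace WeierstrassData

variable (W : WeierstrassData)

/-- The period lattice of `W`. -/
def lattice : Set ℂ := latticeSet W.w1 W.w3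

/-- The third basic half-period `ω₂ = ω₁ + ω₃`. -/
def w2 : ℂ := W.w1 + W.w3

/-- `e₁ = ℘(ω₁)`. -/
def e1 : ℂ := W.P W.w1
/-- `e₂ = ℘(ω₂)`. -/
def e2 : ℂ := W.P W.w2
/-- `e₃ = ℘(ω₃)`. -/
def e3 : ℂ := W.P W.w3

/-- The Rofe-Beketov spectrum of the complex Lamé operator
`L = -d²/dx² + m(m+1) ω² ℘(ωx + z₀)` in `L²(ℝ)`: the set of `λ ∈ ℂ` for which
the equation `Lψ = λψ` has a nonzero bounded solution on the whole real line. -/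
def lameSpectrum (m : ℕ) (ω z0 : ℂ) : Set ℂ :=
  {lam | ∃ φ : ℝ → ℂ, φ ≠ 0 ∧ ContDiff ℝ 2 φ ∧
    (∀ x : ℝ, -deriv (deriv φ) x + (m * (m + 1) : ℂ) * ω ^ 2 * W.P (ω * x + z0) * φ x
      = lam * φ x) ∧ ∃ C : ℝ, ∀ x : ℝ, ‖φ x‖ ≤ C}

/-- The function `u(k) = Re[η k - ω ζ(k)]`, where `η = ζ(ω)`. -/
def uFun (ω : ℂ) : ℂ → ℝ := fun k => (W.Z ω * k - ω * W.Z k).re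

/-- The function `v(k) = Im[η k - ω ζ(k)]`, where `η = ζ(ω)`. -/
def vFun (ω : ℂ) : ℂ → ℝ := fun k => (W.Z ω * k - ω * W.Z k).im

end WeierstrassData




/-- Hermite's solution `ψ(z,k) = σ(z+k)/(σ(z)σ(k)) · exp(-ζ(k)z)` of the
`m = 1` Lamé equation. -/
def hermitePsi (W : WeierstrassData) (k : ℂ) : ℂ → ℂ :=
  fun z => W.S (z + k) / (W.S z * W.S k) * Complex.exp (-W.Z k * z)


variable {w1 w3 : ℂ}

theorem lat_mem_iff {z : ℂ} : z ∈ latticeSet w1 w3 ↔ ∃ m n : ℤ, z = 2 * m * w1 + 2 * n * w3 := Iff.rfl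

theorem lat_zero : (0:ℂ) ∈ latticeSet w1 w3 := ⟨0, 0, by simp⟩

theorem lat_add {x y : ℂ} (hx : x ∈ latticeSet w1 w3) (hy : y ∈ latticeSet w1 w3) :
    x + y ∈ latticeSet w1 w3 := by
  obtain ⟨m, n, rfl⟩ := hx; obtain ⟨m', n', rfl⟩ := hy
  exact ⟨m + m', n + n', by push_cast; ring⟩

theorem lat_neg {x : ℂ} (hx : x ∈ latticeSet w1 w3) : -x ∈ latticeSet w1 w3 := by
  obtain ⟨m, n, rfl⟩ := hx; exact ⟨-m, -n, by push_cast; ring⟩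

theorem lat_countable : (latticeSet w1 w3).Countable := by
  have : latticeSet w1 w3 ⊆ Set.range (fun p : ℤ × ℤ => 2 * (p.1:ℂ) * w1 + 2 * p.2 * w3) := by
    rintro z ⟨m, n, rfl⟩; exact ⟨(m, n), rfl⟩
  exact (Set.countable_range _).mono this

section indep
variable (h1 : w1 ≠ 0) (hind : ∀ r : ℝ, w3 ≠ (r : ℂ) * w1)

include h1 hind in
theorem lat_linind : LinearIndependent ℝ ![(2:ℂ) * w1, 2 * w3] := by
  rw [LinearIndependent.pair_iff]
  intro s t hst
  by_cases ht : t = 0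
  · subst ht
    simp only [zero_smul, add_zero] at hst
    have : (s:ℂ) * (2 * w1) = 0 := by simpa [Complex.real_smul] using hst
    rcases mul_eq_zero.1 this with h | h
    · exact ⟨by exact_mod_cast h, rfl⟩
    · rcases mul_eq_zero.1 h with h | h
      · norm_num at h
      · exact absurd h h1
  · exfalso
    apply hind (-s / t)
    have hst' : (s:ℂ) * (2 * w1) + (t:ℂ) * (2 * w3) = 0 := by
      simpa [Complex.real_smul] using hst
    have ht' : (t:ℂ) ≠ 0 := by exact_mod_cast ht
    have h2 : (t:ℂ) * w3 = -s * w1 := by linear_combination hst' / 2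
    push_cast
    rw [div_mul_eq_mul_div, eq_div_iff ht']
    linear_combination h2

omit h1 hind in
theorem lat_eq_span : latticeSet w1 w3
    = (Submodule.span ℤ (Set.range ![(2:ℂ) * w1, 2 * w3]) : Submodule ℤ ℂ) := by
  have hr : Set.range ![(2:ℂ) * w1, 2 * w3] = {2 * w1, 2 * w3} := by
    ext x; simp [Fin.exists_fin_two, or_comm]
  ext z
  rw [SetLike.mem_coe, hr, Submodule.mem_span_pair]
  constructor
  · rintro ⟨m, n, rfl⟩; exact ⟨m, n, by push_cast [zsmul_eq_mul]; ring⟩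
  · rintro ⟨m, n, rfl⟩; exact ⟨m, n, by push_cast [zsmul_eq_mul]; ring⟩
include h1 hind in
theorem lat_isClosed_discrete :
    IsClosed (latticeSet w1 w3) ∧ DiscreteTopology (latticeSet w1 w3) := by
  have li := lat_linind h1 hind
  have hcard : Fintype.card (Fin 2) = Module.finrank ℝ ℂ := by
    simp [Complex.finrank_real_complex]
  set b : Module.Basis (Fin 2) ℝ ℂ := basisOfLinearIndependentOfCardEqFinrank li hcard with hb
  have hrange : Set.range (b : Fin 2 → ℂ) = Set.range ![(2:ℂ) * w1, 2 * w3] := by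
    rw [hb, coe_basisOfLinearIndependentOfCardEqFinrank]
  have hset : latticeSet w1 w3 = (Submodule.span ℤ (Set.range (b : Fin 2 → ℂ)) : Submodule ℤ ℂ) := by
    rw [hrange]; exact lat_eq_span
  have hd : DiscreteTopology (Submodule.span ℤ (Set.range (b : Fin 2 → ℂ))) := inferInstance
  have hc : IsClosed ((Submodule.span ℤ (Set.range (b : Fin 2 → ℂ))).toAddSubgroup : Set ℂ) := by
    have : DiscreteTopology ((Submodule.span ℤ (Set.range (b : Fin 2 → ℂ))).toAddSubgroup) := hd
    exact AddSubgroup.isClosed_of_discrete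
  constructor
  · rw [hset]; exact hc
  · rw [hset]; exact hd

include h1 hind in
theorem lat_eventually_not (p : ℂ) : ∀ᶠ z in 𝓝[≠] p, z ∉ latticeSet w1 w3 := by
  obtain ⟨hc, hd⟩ := lat_isClosed_discrete h1 hind
  have := (isClosed_and_discrete_iff (S := latticeSet w1 w3)).1 ⟨hc, ⟨hd⟩⟩ p
  exact disjoint_principal_right.1 this

include h1 hind in
theorem lat_exists_fund (x : ℂ) : ∃ v ∈ latticeSet w1 w3, ‖x + v‖ ≤ ‖(2:ℂ) * w1‖ + ‖(2:ℂ) * w3‖ := by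
  have li := lat_linind h1 hind
  have hcard : Fintype.card (Fin 2) = Module.finrank ℝ ℂ := by
    simp [Complex.finrank_real_complex]
  set b : Module.Basis (Fin 2) ℝ ℂ := basisOfLinearIndependentOfCardEqFinrank li hcard with hb
  have hrange : Set.range (b : Fin 2 → ℂ) = Set.range ![(2:ℂ) * w1, 2 * w3] := by
    rw [hb, coe_basisOfLinearIndependentOfCardEqFinrank]
  have hset : latticeSet w1 w3 = (Submodule.span ℤ (Set.range (b : Fin 2 → ℂ)) : Submodule ℤ ℂ) := by
    rw [hrange]; exact lat_eq_span
  obtain ⟨v, hv, -⟩ := ZSpan.exist_unique_vadd_mem_fundamentalDomain b x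
  refine ⟨(v : ℂ), by rw [hset]; exact v.2, ?_⟩
  have hbnd : ∀ y ∈ ZSpan.fundamentalDomain b, ‖y‖ ≤ ∑ j, ‖b j‖ := by
    intro y hy
    rw [← ZSpan.fract_eq_self.mpr hy]
    exact ZSpan.norm_fract_le b y
  have := hbnd _ hv
  have hsum : ∑ j, ‖b j‖ = ‖(2:ℂ) * w1‖ + ‖(2:ℂ) * w3‖ := by
    rw [Fin.sum_univ_two]
    have h0 : b 0 = 2 * w1 := by
      rw [hb, coe_basisOfLinearIndependentOfCardEqFinrank]; rfl
    have h3 : b 1 = 2 * w3 := by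
      rw [hb, coe_basisOfLinearIndependentOfCardEqFinrank]; rfl
    rw [h0, h3]
  rw [hsum] at this
  calc ‖x + (v:ℂ)‖ = ‖(v:ℂ) +ᵥ x‖ := by rw [vadd_eq_add, add_comm]
    _ ≤ _ := this

omit h1 hind in
theorem lat_compl_preconnected : IsPreconnected (latticeSet w1 w3)ᶜ := by
  have := (lat_countable (w1 := w1) (w3 := w3)).isPathConnected_compl_of_one_lt_rank
    (by norm_num [Complex.rank_real_complex])
  exact this.isConnected.isPreconnected

include h1 hind in
theorem w1_not_lat : w1 ∉ latticeSet w1 w3 := by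
  rintro ⟨m, n, h⟩
  by_cases hn : n = 0
  · subst hn
    simp only [Int.cast_zero, mul_zero, zero_mul, add_zero] at h
    have : ((2 * m - 1 : ℤ) : ℂ) * w1 = 0 := by push_cast; linear_combination -h
    rcases mul_eq_zero.1 this with h' | h'
    · have : (2 * m - 1 : ℤ) = 0 := by exact_mod_cast h'
      omega
    · exact h1 h'
  · apply hind ((1 - 2 * m) / (2 * n))
    have hn' : ((2 * n : ℤ) : ℂ) ≠ 0 := by
      exact_mod_cast (by omega : (2 * n : ℤ) ≠ 0)
    push_cast at hn' ⊢
    rw [div_mul_eq_mul_div, eq_div_iff hn']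
    linear_combination -h

end indep
theorem analyticAt_deriv' {f : ℂ → ℂ} {x : ℂ} (h : AnalyticAt ℂ f x) :
    AnalyticAt ℂ (deriv f) x := by
  have : AnalyticOnNhd ℂ f {x} := fun y hy => by rwa [hy]
  exact this.deriv x rfl

/-- A function with zero derivative on an open preconnected set is constant there. -/
theorem const_of_hasDerivAt_zero {U : Set ℂ} (hU : IsOpen U) (hU' : IsPreconnected U)
    {f : ℂ → ℂ} (hf : ∀ z ∈ U, HasDerivAt f 0 z) {x y : ℂ} (hx : x ∈ U) (hy : y ∈ U) :
    f x = f y := by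
  have hdiff : DifferentiableOn ℂ f U := fun z hz => (hf z hz).differentiableAt.differentiableWithinAt
  have han : AnalyticOnNhd ℂ f U := hdiff.analyticOnNhd hU
  obtain ⟨ε, hε, hball⟩ := Metric.isOpen_iff.1 hU x hx
  have hconst : ∀ z ∈ Metric.ball x ε, f z = f x := by
    intro z hz
    refine (convex_ball x ε).is_const_of_fderivWithin_eq_zero
      (hdiff.mono hball) ?_ hz (Metric.mem_ball_self hε)
    intro w hw
    rw [fderivWithin_of_isOpen Metric.isOpen_ball hw]
    have h0 : HasFDerivAt f (0 : ℂ →L[ℂ] ℂ) w := by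
      have := (hf w (hball hw)).hasFDerivAt
      rwa [show ContinuousLinearMap.toSpanSingleton ℂ (0:ℂ) = 0 by ext; simp] at this
    rw [h0.fderiv]
  have hev : f =ᶠ[𝓝 x] fun _ => f x := by
    filter_upwards [Metric.ball_mem_nhds x hε] with z hz using hconst z hz
  have := AnalyticOnNhd.eqOn_of_preconnected_of_eventuallyEq han
    (analyticOnNhd_const (v := f x)) hU' hx hev
  rw [this hy]

namespace WeierstrassData

section WD
variable (W : WeierstrassData)

theorem lat_ev (p : ℂ) : ∀ᶠ z in 𝓝[≠] p, z ∉ W.lattice :=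
  lat_eventually_not W.w1_ne W.indep p

theorem lat_closed : IsClosed W.lattice := (lat_isClosed_discrete W.w1_ne W.indep).1

theorem lat_open_compl : IsOpen W.latticeᶜ := (W.lat_closed).isOpen_compl

theorem lat_prec : IsPreconnected W.latticeᶜ := lat_compl_preconnected

theorem lat_add' {x y : ℂ} (hx : x ∈ W.lattice) (hy : y ∈ W.lattice) : x + y ∈ W.lattice :=
  lat_add hx hy

theorem lat_neg' {x : ℂ} (hx : x ∈ W.lattice) : -x ∈ W.lattice := lat_neg hx

theorem lat_mem_add_iff {x w : ℂ} (hw : w ∈ W.lattice) : x + w ∈ W.lattice ↔ x ∈ W.lattice := by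
  constructor
  · intro h; simpa using W.lat_add' h (W.lat_neg' hw)
  · intro h; exact W.lat_add' h hw

theorem not_lat_add {x w : ℂ} (hx : x ∉ W.lattice) (hw : w ∈ W.lattice) : x + w ∉ W.lattice :=
  fun h => hx ((W.lat_mem_add_iff hw).1 h)

theorem not_lat_neg {x : ℂ} (hx : x ∉ W.lattice) : -x ∉ W.lattice := by
  intro h; exact hx (by simpa using W.lat_neg' h)

theorem w1_not_lat' : W.w1 ∉ W.lattice := w1_not_lat W.w1_ne W.indep

/-- Extend an identity from the complement of the lattice to all of `ℂ` by continuity. -/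
theorem ext_cont {f g : ℂ → ℂ} (hf : Continuous f) (hg : Continuous g)
    (h : ∀ z ∉ W.lattice, f z = g z) (p : ℂ) : f p = g p := by
  have h1 : f =ᶠ[𝓝[≠] p] g := (W.lat_ev p).mono fun z hz => h z hz
  have t1 : Tendsto f (𝓝[≠] p) (𝓝 (f p)) := (hf.tendsto p).mono_left nhdsWithin_le_nhds
  have t2 : Tendsto f (𝓝[≠] p) (𝓝 (g p)) :=
    ((hg.tendsto p).mono_left nhdsWithin_le_nhds).congr' h1.symm
  exact tendsto_nhds_unique t1 t2

theorem const_off_lat {f : ℂ → ℂ} (hf : ∀ z ∉ W.lattice, HasDerivAt f 0 z)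
    {x y : ℂ} (hx : x ∉ W.lattice) (hy : y ∉ W.lattice) : f x = f y :=
  const_of_hasDerivAt_zero W.lat_open_compl W.lat_prec (fun z hz => hf z hz) hx hy

theorem hasDerivAt_Z {z : ℂ} (hz : z ∉ W.lattice) : HasDerivAt W.Z (-W.P z) z := by
  have := (W.Z_diff z hz).hasDerivAt
  rwa [W.Z_deriv z hz] at this

theorem hasDerivAt_Z_shift (c : ℂ) {z : ℂ} (hz : z + c ∉ W.lattice) :
    HasDerivAt (fun z => W.Z (z + c)) (-W.P (z + c)) z := by
  have h := (W.hasDerivAt_Z hz).comp z ((hasDerivAt_id z).add_const c)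
  simpa [Function.comp_def] using h

theorem hasDerivAt_S (z : ℂ) (hz : z ∉ W.lattice) : HasDerivAt W.S (W.Z z * W.S z) z := by
  have := (W.S_diff z).hasDerivAt
  rwa [W.S_deriv z hz] at this

theorem zeta_quasi {w : ℂ} (hw : w ∈ W.lattice) {x y : ℂ} (hx : x ∉ W.lattice)
    (hy : y ∉ W.lattice) : W.Z (x + w) - W.Z x = W.Z (y + w) - W.Z y := by
  apply W.const_off_lat (f := fun z => W.Z (z + w) - W.Z z) _ hx hy
  intro z hz
  have h1 : HasDerivAt (fun z => W.Z (z + w)) (-W.P (z + w)) z :=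
    W.hasDerivAt_Z_shift w (W.not_lat_add hz hw)
  have h2 := h1.sub (W.hasDerivAt_Z hz)
  rwa [W.P_periodic w hw z, sub_neg_eq_add, neg_add_cancel] at h2

theorem P_even {z : ℂ} (hz : z ∉ W.lattice) : W.P (-z) = W.P z := by
  have h1 : HasDerivAt (fun z => W.Z (-z)) (W.P (-z)) z := by
    have := (W.hasDerivAt_Z (W.not_lat_neg hz)).comp z (hasDerivAt_neg z)
    simpa [Function.comp_def] using this
  have h2 : HasDerivAt (fun z => W.Z (-z)) (W.P z) z := by
    have h3 : HasDerivAt (fun z => -W.Z z) (W.P z) z := by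
      simpa using (W.hasDerivAt_Z hz).fun_neg
    exact h3.congr_of_eventuallyEq (Eventually.of_forall fun w => (W.Z_odd w))
  exact h1.unique h2

theorem sigma_quasi {w : ℂ} (hw : w ∈ W.lattice) {η : ℂ}
    (hη : ∀ z, z ∉ W.lattice → W.Z (z + w) = W.Z z + η) :
    ∃ C : ℂ, C ≠ 0 ∧ ∀ z : ℂ, W.S (z + w) = C * Complex.exp (η * z) * W.S z := by
  set g : ℂ → ℂ := fun z => W.S (z + w) * Complex.exp (-(η * z)) / W.S z with hg
  have hgd : ∀ z ∉ W.lattice, HasDerivAt g 0 z := by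
    intro z hz
    have hzw : z + w ∉ W.lattice := W.not_lat_add hz hw
    have h1 : HasDerivAt (fun z => W.S (z + w)) (W.Z (z + w) * W.S (z + w)) z := by
      have := (W.hasDerivAt_S (z + w) hzw).comp z ((hasDerivAt_id z).add_const w)
      simpa [Function.comp_def] using this
    have h2 : HasDerivAt (fun z => Complex.exp (-(η * z))) (-η * Complex.exp (-(η * z))) z := by
      have hlin : HasDerivAt (fun z : ℂ => -(η * z)) (-η) z := by
        simpa using ((hasDerivAt_id z).const_mul η).fun_neg
      simpa [mul_comm] using hlin.cexp
    have h3 := (h1.fun_mul h2).fun_div (W.hasDerivAt_S z hz) (W.S_ne z hz)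
    have : (W.Z (z + w) * W.S (z + w) * Complex.exp (-(η * z)) +
        W.S (z + w) * (-η * Complex.exp (-(η * z)))) * W.S z -
        W.S (z + w) * Complex.exp (-(η * z)) * (W.Z z * W.S z) = 0 := by
      rw [hη z hz]; ring
    rw [this, zero_div] at h3
    exact h3
  set C := g W.w1 with hC
  have hCne : C ≠ 0 := by
    apply div_ne_zero
    · exact mul_ne_zero (W.S_ne _ (W.not_lat_add W.w1_not_lat' hw)) (Complex.exp_ne_zero _)
    · exact W.S_ne _ W.w1_not_lat'
  refine ⟨C, hCne, ?_⟩
  have key : ∀ z ∉ W.lattice, W.S (z + w) = C * Complex.exp (η * z) * W.S z := by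
    intro z hz
    have := W.const_off_lat hgd hz W.w1_not_lat'
    rw [hg] at this
    simp only at this
    have hSz := W.S_ne z hz
    have hexp := Complex.exp_ne_zero (-(η * z))
    field_simp at this
    have hSw1 := W.S_ne _ W.w1_not_lat'
    rw [eq_div_iff hSw1] at this
    have hexpz : Complex.exp (η * z) * Complex.exp (-(η * z)) = 1 := by
      rw [← Complex.exp_add]; simp
    rw [hC, hg]
    simp only
    rw [eq_comm, div_mul_eq_mul_div, div_mul_eq_mul_div, div_eq_iff hSw1, eq_comm]
    rw [mul_comm z η] at this
    linear_combination (Complex.exp (η * z)) * this - (W.S (z + w) * W.S W.w1) * hexpz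
  intro p
  have hc1 : Continuous (fun z => W.S (z + w)) := W.S_diff.continuous.comp (by continuity)
  have hc2 : Continuous (fun z => C * Complex.exp (η * z) * W.S z) := by
    apply Continuous.mul
    · exact continuous_const.mul (Complex.continuous_exp.comp (continuous_const.mul continuous_id))
    · exact W.S_diff.continuous
  exact W.ext_cont hc1 hc2 key p

end WD
end WeierstrassData
namespace WeierstrassData
section WD2
variable (W : WeierstrassData)

theorem S_zero : W.S 0 = 0 := by
  have t1 : Tendsto W.S (𝓝[≠] (0:ℂ)) (𝓝 (W.S 0)) :=
    (W.S_diff.continuous.tendsto 0).mono_left nhdsWithin_le_nhds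
  have t2 : Tendsto (fun z : ℂ => W.S z / z * z) (𝓝[≠] (0:ℂ)) (𝓝 (1 * 0)) :=
    W.S_norm.mul ((continuous_id.tendsto 0).mono_left nhdsWithin_le_nhds)
  have heq : ∀ᶠ z in 𝓝[≠] (0:ℂ), W.S z / z * z = W.S z := by
    filter_upwards [self_mem_nhdsWithin] with z hz
    exact div_mul_cancel₀ _ hz
  have t3 : Tendsto W.S (𝓝[≠] (0:ℂ)) (𝓝 (1 * 0)) := t2.congr' (heq.mono fun z h => h)
  exact tendsto_nhds_unique t1 (by simpa using t3)

theorem hasDerivAt_S_zero : HasDerivAt W.S 1 0 := by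
  rw [hasDerivAt_iff_tendsto_slope]
  apply W.S_norm.congr'
  filter_upwards [self_mem_nhdsWithin] with z hz
  simp [slope, W.S_zero, div_eq_inv_mul, smul_eq_mul]

theorem deriv_S_zero : deriv W.S 0 = 1 := W.hasDerivAt_S_zero.deriv

/-- `u(z) = σ(z)/z` continued across `0`. -/
def uu : ℂ → ℂ := dslope W.S 0
/-- `N(z) = z σ'(z) - σ(z)`. -/
def Nf : ℂ → ℂ := fun z => z * deriv W.S z - W.S z
/-- `m`, with `N(z) = z² m(z)`. -/
def mm : ℂ → ℂ := dslope (dslope W.Nf 0) 0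
/-- `v(z) = ζ(z) - 1/z` continued across `0`. -/
def vv : ℂ → ℂ := fun z => W.mm z / W.uu z

theorem derivS_diff : Differentiable ℂ (deriv W.S) := fun z =>
  (analyticAt_deriv' (W.S_diff.analyticAt z)).differentiableAt

theorem Nf_diff : Differentiable ℂ W.Nf :=
  (differentiable_id.mul W.derivS_diff).sub W.S_diff

theorem uu_diff : Differentiable ℂ W.uu := by
  rw [← differentiableOn_univ]
  exact (Complex.differentiableOn_dslope (univ_mem)).2 W.S_diff.differentiableOn

theorem mm_diff : Differentiable ℂ W.mm := by
  rw [← differentiableOn_univ]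
  apply (Complex.differentiableOn_dslope (univ_mem)).2
  exact (Complex.differentiableOn_dslope (univ_mem)).2 W.Nf_diff.differentiableOn

theorem uu_zero : W.uu 0 = 1 := by rw [uu, dslope_same, W.deriv_S_zero]

theorem S_eq (z : ℂ) : W.S z = z * W.uu z := by
  rcases eq_or_ne z 0 with rfl | hz
  · simp [W.S_zero]
  · rw [uu, dslope_of_ne _ hz, slope]
    rw [W.S_zero, sub_zero, vsub_eq_sub, sub_zero, smul_eq_mul, ← mul_assoc, mul_inv_cancel₀ hz, one_mul]

theorem Nf_zero : W.Nf 0 = 0 := by simp [Nf, W.S_zero]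

theorem deriv_Nf_zero : deriv W.Nf 0 = 0 := by
  have h1 : HasDerivAt (fun z => z * deriv W.S z) (1 * deriv W.S 0 + 0 * deriv (deriv W.S) 0) 0 :=
    (hasDerivAt_id 0).mul (W.derivS_diff 0).hasDerivAt
  have h2 : HasDerivAt W.Nf (1 * deriv W.S 0 + 0 * deriv (deriv W.S) 0 - deriv W.S 0) 0 :=
    h1.sub (W.S_diff 0).hasDerivAt
  have := h2.deriv
  rw [this]; ring

theorem Nf_eq (z : ℂ) : W.Nf z = z ^ 2 * W.mm z := by
  have h1 : z • dslope W.Nf 0 z = W.Nf z := by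
    have := sub_smul_dslope W.Nf 0 z
    rwa [sub_zero, W.Nf_zero, sub_zero] at this
  have h2 : z • W.mm z = dslope W.Nf 0 z := by
    have := sub_smul_dslope (dslope W.Nf 0) 0 z
    rwa [sub_zero, dslope_same, W.deriv_Nf_zero, sub_zero] at this
  rw [← h1, ← h2]
  simp [smul_eq_mul]; ring

theorem local_struct : ∃ ρ > (0:ℝ), ∀ z : ℂ, z ≠ 0 → ‖z‖ < ρ →
    z ∉ W.lattice ∧ W.uu z ≠ 0 ∧ W.Z z = 1 / z + W.vv z ∧ W.P z = 1 / z ^ 2 - deriv W.vv z := by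
  have h1 : ∀ᶠ z in 𝓝[≠] (0:ℂ), z ∉ W.lattice := W.lat_ev 0
  have h2 : ∀ᶠ z in 𝓝[≠] (0:ℂ), W.uu z ≠ 0 := by
    apply Filter.Eventually.filter_mono nhdsWithin_le_nhds
    apply W.uu_diff.continuous.continuousAt.eventually_ne
    rw [W.uu_zero]; exact one_ne_zero
  obtain ⟨ρ, hρ, hsub⟩ := (nhdsWithin_hasBasis Metric.nhds_basis_ball _).mem_iff.1 (h1.and h2)
  refine ⟨ρ, hρ, ?_⟩
  have key : ∀ z : ℂ, z ≠ 0 → ‖z‖ < ρ → z ∉ W.lattice ∧ W.uu z ≠ 0 ∧ W.Z z = 1 / z + W.vv z := by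
    intro z hz hnorm
    have hmem : z ∈ Metric.ball (0:ℂ) ρ ∩ {(0:ℂ)}ᶜ := by
      constructor
      · rwa [Metric.mem_ball, dist_zero_right]
      · exact hz
    obtain ⟨hlat, huu⟩ := hsub hmem
    refine ⟨hlat, huu, ?_⟩
    have hS := W.S_ne z hlat
    have hZ : W.Z z = deriv W.S z / W.S z := by
      rw [W.S_deriv z hlat, mul_div_assoc, div_self hS, mul_one]
    have hN := W.Nf_eq z
    rw [Nf] at hN
    have e1 : deriv W.S z / W.S z - 1 / z = (z * deriv W.S z - W.S z) / (z * W.S z) := by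
      field_simp
    have e2 : (z * deriv W.S z - W.S z) / (z * W.S z) = W.mm z / W.uu z := by
      rw [hN, W.S_eq z, show z * (z * W.uu z) = z ^ 2 * W.uu z by ring,
        mul_div_mul_left _ _ (pow_ne_zero 2 hz)]
    rw [hZ, vv]
    linear_combination e1 + e2
  intro z hz hnorm
  obtain ⟨hlat, huu, hZeq⟩ := key z hz hnorm
  refine ⟨hlat, huu, hZeq, ?_⟩
  -- now the P part
  have hev : W.Z =ᶠ[𝓝 z] fun w => 1 / w + W.vv w := by
    have hopen : IsOpen {w : ℂ | w ≠ 0 ∧ ‖w‖ < ρ} := by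
      apply IsOpen.inter isOpen_ne
      have : Continuous fun w : ℂ => ‖w‖ := continuous_norm
      exact isOpen_lt this continuous_const
    filter_upwards [hopen.mem_nhds ⟨hz, hnorm⟩] with w ⟨hw1, hw2⟩
    exact (key w hw1 hw2).2.2
  have hvd : DifferentiableAt ℂ W.vv z := (W.mm_diff z).div (W.uu_diff z) huu
  have hd : HasDerivAt (fun w : ℂ => 1 / w + W.vv w) (-(z ^ 2)⁻¹ + deriv W.vv z) z := by
    have hinv : HasDerivAt (fun w : ℂ => 1 / w) (-(z ^ 2)⁻¹) z := by
      simpa [one_div] using hasDerivAt_inv hz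
    exact hinv.add hvd.hasDerivAt
  have : deriv W.Z z = -(z ^ 2)⁻¹ + deriv W.vv z := by
    rw [hev.deriv_eq, hd.deriv]
  have hP := W.Z_deriv z hlat
  rw [this] at hP
  have : W.P z = (z ^ 2)⁻¹ - deriv W.vv z := by linear_combination hP
  rw [this, one_div]

end WD2
end WeierstrassData
namespace WeierstrassData
section WD3
variable (W : WeierstrassData)

theorem tendsto_neg_punctured (W : WeierstrassData) : Tendsto (fun z : ℂ => -z) (𝓝[≠] (0:ℂ)) (𝓝[≠] (0:ℂ)) := by
  rw [tendsto_nhdsWithin_iff]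
  constructor
  · exact (continuous_neg.tendsto' (0:ℂ) 0 (by simp)).mono_left nhdsWithin_le_nhds
  · filter_upwards [self_mem_nhdsWithin] with z hz
    simpa using hz

theorem vv_contAt : ContinuousAt W.vv 0 :=
  (((W.mm_diff 0).div (W.uu_diff 0)) (by rw [W.uu_zero]; exact one_ne_zero)).continuousAt

theorem vv_zero : W.vv 0 = 0 := by
  obtain ⟨ρ, hρ, hloc⟩ := W.local_struct
  have hodd : ∀ᶠ z in 𝓝[≠] (0:ℂ), W.vv z = -W.vv (-z) := by
    have hball : ∀ᶠ z in 𝓝[≠] (0:ℂ), ‖z‖ < ρ := by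
      apply Filter.Eventually.filter_mono nhdsWithin_le_nhds
      have : ContinuousAt (fun z : ℂ => ‖z‖) 0 := continuous_norm.continuousAt
      have := this.eventually_lt_const (by simpa using hρ)
      simpa using this
    filter_upwards [hball, self_mem_nhdsWithin] with z hz hz0
    have h1 := (hloc z hz0 hz).2.2.1
    have h2 := (hloc (-z) (by simpa using hz0) (by simpa using hz)).2.2.1
    rw [W.Z_odd z] at h2
    have : -(1 / z + W.vv z) = 1 / (-z) + W.vv (-z) := by rw [← h1, ← h2]
    have hzz : z ≠ 0 := hz0
    have h3 : 1 / (-z : ℂ) = -(1 / z) := by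
      rw [div_neg]
    rw [h3] at this
    linear_combination -this
  have t1 : Tendsto W.vv (𝓝[≠] (0:ℂ)) (𝓝 (W.vv 0)) :=
    W.vv_contAt.continuousWithinAt.tendsto
  have t2 : Tendsto (fun z => -W.vv (-z)) (𝓝[≠] (0:ℂ)) (𝓝 (-W.vv 0)) := by
    have := (t1.comp (W.tendsto_neg_punctured)).neg
    simpa using this
  have := tendsto_nhds_unique t1 (t2.congr' (hodd.mono fun z h => h.symm))
  linear_combination this / 2

theorem deriv_vv_contAt : ContinuousAt (deriv W.vv) 0 := by
  set V : Set ℂ := {z | W.uu z ≠ 0} with hV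
  have hVopen : IsOpen V := isOpen_ne.preimage W.uu_diff.continuous
  have h0V : (0:ℂ) ∈ V := by rw [hV]; simp [W.uu_zero]
  have hdiff : DifferentiableOn ℂ W.vv V := fun z hz =>
    (((W.mm_diff z).div (W.uu_diff z)) hz).differentiableWithinAt
  have han : AnalyticOnNhd ℂ W.vv V := hdiff.analyticOnNhd hVopen
  exact ((han.deriv) 0 h0V).continuousAt

theorem deriv_vv_zero : deriv W.vv 0 = 0 := by
  obtain ⟨ρ, hρ, hloc⟩ := W.local_struct
  have hball : ∀ᶠ z in 𝓝[≠] (0:ℂ), ‖z‖ < ρ := by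
    apply Filter.Eventually.filter_mono nhdsWithin_le_nhds
    have : ContinuousAt (fun z : ℂ => ‖z‖) 0 := continuous_norm.continuousAt
    have := this.eventually_lt_const (by simpa using hρ)
    simpa using this
  have hev : ∀ᶠ z in 𝓝[≠] (0:ℂ), W.P z - 1 / z ^ 2 = -deriv W.vv z := by
    filter_upwards [hball, self_mem_nhdsWithin] with z hz hz0
    have := (hloc z hz0 hz).2.2.2
    linear_combination this
  have t1 : Tendsto (fun z => -deriv W.vv z) (𝓝[≠] (0:ℂ)) (𝓝 (-deriv W.vv 0)) :=
    (W.deriv_vv_contAt.continuousWithinAt.tendsto).neg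
  have t2 : Tendsto (fun z => -deriv W.vv z) (𝓝[≠] (0:ℂ)) (𝓝 0) :=
    W.P_pole.congr' hev
  have := tendsto_nhds_unique t1 t2
  linear_combination -this

end WD3
end WeierstrassData
namespace WeierstrassData
section ADD
variable (W : WeierstrassData) (k : ℂ)

/-- `Q(z) = ζ(z+k) - ζ(z) - ζ(k)`. -/
def Qf : ℂ → ℂ := fun z => W.Z (z + k) - W.Z z - W.Z k
/-- `F(z) = Q(z)² - ℘(z) - ℘(z+k) - ℘(k)`. -/
def Fraw : ℂ → ℂ := fun z => W.Qf k z ^ 2 - W.P z - W.P (z + k) - W.P k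
open scoped Classical in
/-- `F` with its removable singularities filled in by `0`. -/
def Fhat : ℂ → ℂ := fun z =>
  if z ∈ W.lattice ∨ z + k ∈ W.lattice then 0 else W.Fraw k z

theorem bad_iff_add {w z : ℂ} (hw : w ∈ W.lattice) :
    (z + w ∈ W.lattice ∨ z + w + k ∈ W.lattice) ↔ (z ∈ W.lattice ∨ z + k ∈ W.lattice) := by
  rw [W.lat_mem_add_iff hw, show z + w + k = z + k + w by ring, W.lat_mem_add_iff hw]

theorem Qf_periodic {w z : ℂ} (hw : w ∈ W.lattice) (hz : z ∉ W.lattice)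
    (hzk : z + k ∉ W.lattice) : W.Qf k (z + w) = W.Qf k z := by
  have h1 := W.zeta_quasi hw (x := z + k) (y := z) hzk hz
  unfold Qf
  rw [show z + w + k = z + k + w by ring]
  linear_combination h1

theorem Fraw_periodic {w z : ℂ} (hw : w ∈ W.lattice) (hz : z ∉ W.lattice)
    (hzk : z + k ∉ W.lattice) : W.Fraw k (z + w) = W.Fraw k z := by
  unfold Fraw
  rw [W.Qf_periodic k hw hz hzk, W.P_periodic w hw z,
    show z + w + k = z + k + w by ring, W.P_periodic w hw (z + k)]

theorem Qf_symm (z : ℂ) : W.Qf k (-z - k) = W.Qf k z := by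
  unfold Qf
  rw [show -z - k + k = -z by ring, show -z - k = -(z + k) by ring, W.Z_odd, W.Z_odd]
  ring

theorem Fraw_symm {z : ℂ} (hz : z ∉ W.lattice) (hzk : z + k ∉ W.lattice) :
    W.Fraw k (-z - k) = W.Fraw k z := by
  unfold Fraw
  rw [W.Qf_symm, show -z - k + k = -z by ring, show -z - k = -(z + k) by ring,
    W.P_even hz, W.P_even hzk]
  ring

theorem Fraw_diffAt {z : ℂ} (hz : z ∉ W.lattice) (hzk : z + k ∉ W.lattice) :
    DifferentiableAt ℂ (W.Fraw k) z := by
  have hshift : DifferentiableAt ℂ (fun z => z + k) z := (differentiable_id.add_const k) z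
  have h1 : DifferentiableAt ℂ (fun z => W.Z (z + k)) z :=
    (W.Z_diff _ hzk).comp z hshift
  have h2 : DifferentiableAt ℂ (fun z => W.P (z + k)) z :=
    (W.P_diff _ hzk).comp z hshift
  have hQ : DifferentiableAt ℂ (W.Qf k) z := (h1.sub (W.Z_diff z hz)).sub_const _
  exact (((hQ.pow 2).sub (W.P_diff z hz)).sub h2).sub_const _

theorem tendsto_sub_punctured (b : ℂ) :
    Tendsto (fun z : ℂ => z - b) (𝓝[≠] b) (𝓝[≠] (0:ℂ)) := by
  rw [tendsto_nhdsWithin_iff]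
  constructor
  · have : Tendsto (fun z : ℂ => z - b) (𝓝 b) (𝓝 (b - b)) :=
      (continuous_id.sub continuous_const).tendsto b
    rw [sub_self] at this
    exact this.mono_left nhdsWithin_le_nhds
  · filter_upwards [self_mem_nhdsWithin] with z hz
    simp only [mem_compl_iff, mem_singleton_iff, sub_eq_zero]
    exact hz

theorem tendsto_const_sub_punctured (b : ℂ) :
    Tendsto (fun z : ℂ => b - z) (𝓝[≠] b) (𝓝[≠] (0:ℂ)) := by
  rw [tendsto_nhdsWithin_iff]
  constructor
  · have : Tendsto (fun z : ℂ => b - z) (𝓝 b) (𝓝 (b - b)) :=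
      (continuous_const.sub continuous_id).tendsto b
    rw [sub_self] at this
    exact this.mono_left nhdsWithin_le_nhds
  · filter_upwards [self_mem_nhdsWithin] with z hz
    simp only [mem_compl_iff, mem_singleton_iff, sub_eq_zero]
    exact fun h => hz h.symm

theorem tendsto_add_punctured (b c : ℂ) :
    Tendsto (fun z : ℂ => z + c) (𝓝[≠] b) (𝓝[≠] (b + c)) := by
  rw [tendsto_nhdsWithin_iff]
  constructor
  · exact ((continuous_id.add continuous_const).tendsto b).mono_left nhdsWithin_le_nhds
  · filter_upwards [self_mem_nhdsWithin] with z hz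
    have hz' : z ≠ b := hz
    simp only [mem_compl_iff, mem_singleton_iff]
    intro h
    exact hz' (by linear_combination h)

theorem bad_ev (p : ℂ) : ∀ᶠ z in 𝓝[≠] p, ¬(z ∈ W.lattice ∨ z + k ∈ W.lattice) := by
  have h1 : ∀ᶠ z in 𝓝[≠] p, z ∉ W.lattice := W.lat_ev p
  have h2 : ∀ᶠ z in 𝓝[≠] p, z + k ∉ W.lattice :=
    (tendsto_add_punctured p k).eventually (W.lat_ev (p + k))
  filter_upwards [h1, h2] with z hz1 hz2
  rintro (h | h)
  exacts [hz1 h, hz2 h]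

variable {k}

theorem Fraw_tendsto_zero (hk : k ∉ W.lattice) :
    Tendsto (W.Fraw k) (𝓝[≠] (0:ℂ)) (𝓝 0) := by
  obtain ⟨ρ, hρ, hloc⟩ := W.local_struct
  set a : ℂ → ℂ := fun z => W.Z (z + k) - W.Z k - W.vv z with ha
  have hshift : HasDerivAt (fun z : ℂ => W.Z (z + k)) (-W.P (0 + k)) 0 :=
    W.hasDerivAt_Z_shift k (by rwa [zero_add])
  have hvd : DifferentiableAt ℂ W.vv 0 :=
    ((W.mm_diff 0).div (W.uu_diff 0)) (by rw [W.uu_zero]; exact one_ne_zero)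
  have hvD : HasDerivAt W.vv 0 0 := by
    have := hvd.hasDerivAt
    rwa [W.deriv_vv_zero] at this
  have haD : HasDerivAt a (-W.P k) 0 := by
    have := (hshift.sub_const (W.Z k)).fun_sub hvD
    simpa using this
  have haDiff : DifferentiableAt ℂ a 0 := haD.differentiableAt
  have ha0 : a 0 = 0 := by simp [ha, W.vv_zero]
  set G : ℂ → ℂ := fun z =>
    a z ^ 2 - 2 * dslope a 0 z + deriv W.vv z - W.P (z + k) - W.P k with hG
  have hG0 : G 0 = 0 := by
    rw [hG]
    simp only [dslope_same, ha0, haD.deriv, W.deriv_vv_zero, zero_add]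
    ring
  have hGcont : ContinuousAt G 0 := by
    apply ContinuousAt.sub
    apply ContinuousAt.sub
    apply ContinuousAt.add
    apply ContinuousAt.sub
    · exact (haDiff.continuousAt.pow 2)
    · exact (continuousAt_const.mul (continuousAt_dslope_same.2 haDiff))
    · exact W.deriv_vv_contAt
    · have h := (W.P_diff k hk).continuousAt
      rw [← zero_add k] at h
      have h2 : ContinuousAt (fun z : ℂ => z + k) 0 := (continuous_add_right k).continuousAt
      exact ContinuousAt.comp (g := W.P) (f := fun z : ℂ => z + k) (x := (0:ℂ)) h h2
    · exact continuousAt_const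
  have hball : ∀ᶠ z in 𝓝[≠] (0:ℂ), ‖z‖ < ρ := by
    apply Filter.Eventually.filter_mono nhdsWithin_le_nhds
    have : ContinuousAt (fun z : ℂ => ‖z‖) 0 := continuous_norm.continuousAt
    have := this.eventually_lt_const (by simpa using hρ)
    simpa using this
  have heq : ∀ᶠ z in 𝓝[≠] (0:ℂ), W.Fraw k z = G z := by
    filter_upwards [hball, self_mem_nhdsWithin] with z hz hz0
    have hz0' : (z:ℂ) ≠ 0 := hz0
    obtain ⟨hlat, huu, hZeq, hPeq⟩ := hloc z hz0' hz
    have hQ : W.Qf k z = a z - 1 / z := by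
      unfold Qf; rw [hZeq, ha]; ring
    have hds : dslope a 0 z = a z / z := by
      rw [dslope_of_ne _ hz0', slope_def_field, ha0]
      simp
    have hGz : G z = a z ^ 2 - 2 * (a z / z) + deriv W.vv z - W.P (z + k) - W.P k := by
      rw [hG]
      simp only
      rw [hds]
    unfold Fraw
    rw [hQ, hPeq, hGz]
    field_simp
    ring
  have : Tendsto G (𝓝[≠] (0:ℂ)) (𝓝 0) := by
    have h := hGcont.tendsto.mono_left (nhdsWithin_le_nhds : 𝓝[≠] (0:ℂ) ≤ 𝓝 0)
    rwa [hG0] at h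
  exact this.congr' (heq.mono fun z h => h.symm)

theorem Fhat_tendsto (hk : k ∉ W.lattice) {b : ℂ} (hb : b ∈ W.lattice ∨ b + k ∈ W.lattice) :
    Tendsto (W.Fhat k) (𝓝[≠] b) (𝓝 0) := by
  rcases hb with hbL | hbkL
  · have heq : ∀ᶠ z in 𝓝[≠] b, W.Fhat k z = W.Fraw k (z - b) := by
      filter_upwards [W.bad_ev k b] with z hzb
      push_neg at hzb
      obtain ⟨hz, hzk⟩ := hzb
      have h1 : z - b ∉ W.lattice := fun h => hz (by
        have := W.lat_add' h hbL; simpa using this)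
      have h2 : z - b + k ∉ W.lattice := fun h => hzk (by
        have := W.lat_add' h hbL
        rwa [show z - b + k + b = z + k by ring] at this)
      have := W.Fraw_periodic k hbL h1 h2
      rw [show z - b + b = z by ring] at this
      rw [Fhat, if_neg (by push_neg; exact ⟨hz, hzk⟩), ← this]
    exact ((W.Fraw_tendsto_zero hk).comp (tendsto_sub_punctured b)).congr' (heq.mono fun z h => h.symm)
  · have hbL : b ∉ W.lattice := fun h => hk (by
      have := W.lat_add' hbkL (W.lat_neg' h)
      simpa [add_comm] using (by rwa [show b + k + -b = k by ring] at this : k ∈ W.lattice))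
    have heq : ∀ᶠ z in 𝓝[≠] b, W.Fhat k z = W.Fraw k (b - z) := by
      filter_upwards [W.bad_ev k b] with z hzb
      push_neg at hzb
      obtain ⟨hz, hzk⟩ := hzb
      have h1 : -z - k ∉ W.lattice := fun h => hzk (by
        have := W.lat_neg' h
        rwa [show -(-z - k) = z + k by ring] at this)
      have h2 : -z - k + k ∉ W.lattice := fun h => hz (by
        rw [show -z - k + k = -z by ring] at h; simpa using W.lat_neg' h)
      have hper := W.Fraw_periodic k hbkL h1 h2
      rw [show -z - k + (b + k) = b - z by ring] at hper
      have hsym := W.Fraw_symm k hz hzk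
      rw [Fhat, if_neg (by push_neg; exact ⟨hz, hzk⟩), ← hsym, ← hper]
    exact ((W.Fraw_tendsto_zero hk).comp (tendsto_const_sub_punctured b)).congr' (heq.mono fun z h => h.symm)

theorem Fhat_diff (hk : k ∉ W.lattice) : Differentiable ℂ (W.Fhat k) := by
  have hbadclosed : IsClosed {z : ℂ | z ∈ W.lattice ∨ z + k ∈ W.lattice} := by
    have h2 : IsClosed {z : ℂ | z + k ∈ W.lattice} :=
      W.lat_closed.preimage (continuous_id.add continuous_const)
    exact W.lat_closed.union h2
  have hgood : ∀ z : ℂ, ¬(z ∈ W.lattice ∨ z + k ∈ W.lattice) →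
      DifferentiableAt ℂ (W.Fhat k) z := by
    intro z hz
    have hev : W.Fhat k =ᶠ[𝓝 z] W.Fraw k := by
      filter_upwards [hbadclosed.isOpen_compl.mem_nhds hz] with w hw
      simp only [Fhat]
      rw [if_neg (show ¬(w ∈ W.lattice ∨ w + k ∈ W.lattice) from hw)]
    push_neg at hz
    exact (W.Fraw_diffAt k hz.1 hz.2).congr_of_eventuallyEq hev
  intro b
  by_cases hb : b ∈ W.lattice ∨ b + k ∈ W.lattice
  · have hs : {z : ℂ | z ≠ b → ¬(z ∈ W.lattice ∨ z + k ∈ W.lattice)} ∈ 𝓝 b := by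
      have := W.bad_ev k b
      rwa [eventually_nhdsWithin_iff] at this
    have hd : DifferentiableOn ℂ (W.Fhat k)
        ({z : ℂ | z ≠ b → ¬(z ∈ W.lattice ∨ z + k ∈ W.lattice)} \ {b}) := by
      rintro z ⟨hz1, hz2⟩
      exact (hgood z (hz1 hz2)).differentiableWithinAt
    have htends := W.Fhat_tendsto hk hb
    have hFb : W.Fhat k b = 0 := by rw [Fhat, if_pos hb]
    have ho : (fun z => W.Fhat k z - W.Fhat k b) =o[𝓝[≠] b] fun z => (z - b)⁻¹ := by
      have hbd : IsBoundedUnder (· ≤ ·) (𝓝[≠] b) (norm ∘ (W.Fhat k)) :=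
        Filter.Tendsto.isBoundedUnder_le (show Tendsto (norm ∘ (W.Fhat k)) (𝓝[≠] b)
          (𝓝 ‖(0:ℂ)‖) from htends.norm)
      simp only [hFb, sub_zero]
      exact hbd.isLittleO_sub_self_inv
    have H := Complex.differentiableOn_update_limUnder_of_isLittleO hs hd ho
    have hupd : Function.update (W.Fhat k) b (limUnder (𝓝[≠] b) (W.Fhat k)) = W.Fhat k := by
      rw [htends.limUnder_eq, ← hFb]
      exact Function.update_eq_self _ _
    rw [hupd] at H
    exact H.differentiableAt hs
  · exact hgood b hb

theorem Fhat_periodic (hk : k ∉ W.lattice) {w : ℂ} (hw : w ∈ W.lattice) (z : ℂ) :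
    W.Fhat k (z + w) = W.Fhat k z := by
  by_cases hb : z ∈ W.lattice ∨ z + k ∈ W.lattice
  · rw [Fhat, Fhat, if_pos hb, if_pos ((W.bad_iff_add k hw).2 hb)]
  · have hb' : ¬(z + w ∈ W.lattice ∨ z + w + k ∈ W.lattice) := fun h =>
      hb ((W.bad_iff_add k hw).1 h)
    rw [Fhat, Fhat, if_neg hb', if_neg hb]
    push_neg at hb
    exact W.Fraw_periodic k hw hb.1 hb.2

theorem add_formula (hk : k ∉ W.lattice) {z : ℂ} (hz : z ∉ W.lattice)
    (hzk : z + k ∉ W.lattice) :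
    (W.Z (z + k) - W.Z z - W.Z k) ^ 2 = W.P z + W.P (z + k) + W.P k := by
  have hbound : ∃ C : ℝ, ∀ x : ℂ, ‖W.Fhat k x‖ ≤ C := by
    set R : ℝ := ‖(2:ℂ) * W.w1‖ + ‖(2:ℂ) * W.w3‖ with hR
    obtain ⟨C, hC⟩ := (isCompact_closedBall (0:ℂ) R).exists_bound_of_continuousOn
      ((W.Fhat_diff hk).continuous.continuousOn)
    refine ⟨C, fun x => ?_⟩
    obtain ⟨v, hv, hnorm⟩ := lat_exists_fund W.w1_ne W.indep x
    have := W.Fhat_periodic hk (w := v) hv x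
    rw [← this]
    apply hC
    rw [Metric.mem_closedBall, dist_zero_right]
    exact hnorm
  obtain ⟨C, hC⟩ := hbound
  have hrange : Bornology.IsBounded (Set.range (W.Fhat k)) := by
    rw [Metric.isBounded_iff_subset_closedBall 0]
    exact ⟨C, by rintro _ ⟨x, rfl⟩; rw [Metric.mem_closedBall, dist_zero_right]; exact hC x⟩
  have hzero := (W.Fhat_diff hk).apply_eq_apply_of_bounded hrange z 0
  unfold Fhat at hzero
  rw [if_neg (show ¬(z ∈ W.lattice ∨ z + k ∈ W.lattice) by push_neg; exact ⟨hz, hzk⟩),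
    if_pos (Or.inl (show (0:ℂ) ∈ W.lattice from lat_zero))] at hzero
  unfold Fraw Qf at hzero
  linear_combination hzero

end ADD
end WeierstrassData

namespace WeierstrassData
section PSI
variable (W : WeierstrassData) {k : ℂ}

theorem psi_eq (k : ℂ) : hermitePsi W k =
    fun z => (W.S (z + k) * Complex.exp (-W.Z k * z)) / (W.S z * W.S k) := by
  funext w
  rw [hermitePsi]
  ring

theorem psi_hasDerivAt (hk : k ∉ W.lattice) {z : ℂ} (hz : z ∉ W.lattice)
    (hzk : z + k ∉ W.lattice) :
    HasDerivAt (hermitePsi W k) (W.Qf k z * hermitePsi W k z) z := by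
  have hne : W.S z * W.S k ≠ 0 := mul_ne_zero (W.S_ne z hz) (W.S_ne k hk)
  have h1 : HasDerivAt (fun z => W.S (z + k)) (W.Z (z + k) * W.S (z + k)) z := by
    have := (W.hasDerivAt_S (z + k) hzk).comp z ((hasDerivAt_id z).add_const k)
    simpa [Function.comp_def] using this
  have h2 : HasDerivAt (fun z => Complex.exp (-W.Z k * z))
      (-W.Z k * Complex.exp (-W.Z k * z)) z := by
    have hlin : HasDerivAt (fun z : ℂ => -W.Z k * z) (-W.Z k) z := by
      simpa using (hasDerivAt_id z).const_mul (-W.Z k)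
    simpa [mul_comm] using hlin.cexp
  have hden : HasDerivAt (fun z => W.S z * W.S k) (W.Z z * W.S z * W.S k) z :=
    (W.hasDerivAt_S z hz).mul_const _
  have h := (h1.fun_mul h2).fun_div hden hne
  rw [psi_eq]
  refine h.congr_deriv ?_
  simp only [Qf]
  field_simp
  ring

theorem psi_diffOn (hk : k ∉ W.lattice) :
    DifferentiableOn ℂ (hermitePsi W k) W.latticeᶜ := by
  rw [psi_eq]
  apply DifferentiableOn.div
  · apply DifferentiableOn.mul
    · exact (W.S_diff.comp (differentiable_id.add_const k)).differentiableOn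
    · exact (Complex.differentiable_exp.comp (differentiable_id.const_mul (-W.Z k))).differentiableOn
  · exact (W.S_diff.mul_const (W.S k)).differentiableOn
  · exact fun z hz => mul_ne_zero (W.S_ne z hz) (W.S_ne k hk)

theorem lame_main (hk : k ∉ W.lattice) {z : ℂ} (hz : z ∉ W.lattice) :
    -deriv (deriv (hermitePsi W k)) z + 2 * W.P z * hermitePsi W k z
      = (-W.P k) * hermitePsi W k z := by
  have hUopen : IsOpen {w : ℂ | w ∉ W.lattice ∧ w + k ∉ W.lattice} := by
    have h2 : IsClosed {w : ℂ | w + k ∈ W.lattice} :=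
      W.lat_closed.preimage (continuous_id.add continuous_const)
    have := (W.lat_closed.union h2).isOpen_compl
    convert this using 1
    ext w
    simp [not_or]
  -- main case, as an auxiliary statement
  have main : ∀ w : ℂ, w ∉ W.lattice → w + k ∉ W.lattice →
      -deriv (deriv (hermitePsi W k)) w + 2 * W.P w * hermitePsi W k w
        = (-W.P k) * hermitePsi W k w := by
    intro w hw hwk
    have hd1 : deriv (hermitePsi W k) =ᶠ[𝓝 w]
        fun x => W.Qf k x * hermitePsi W k x := by
      filter_upwards [hUopen.mem_nhds ⟨hw, hwk⟩] with x ⟨hx, hxk⟩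
      exact (W.psi_hasDerivAt hk hx hxk).deriv
    have hQd : HasDerivAt (W.Qf k) (W.P w - W.P (w + k)) w := by
      have h1 := W.hasDerivAt_Z_shift k hwk
      have h2 := W.hasDerivAt_Z hw
      have := (h1.fun_sub h2).sub_const (W.Z k)
      refine this.congr_deriv ?_
      ring
    have hprod : HasDerivAt (fun x => W.Qf k x * hermitePsi W k x)
        ((W.P w - W.P (w + k)) * hermitePsi W k w + W.Qf k w * (W.Qf k w * hermitePsi W k w))
        w := hQd.mul (W.psi_hasDerivAt hk hw hwk)
    have hdd : deriv (deriv (hermitePsi W k)) w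
        = (W.P w - W.P (w + k)) * hermitePsi W k w
          + W.Qf k w * (W.Qf k w * hermitePsi W k w) := by
      rw [hd1.deriv_eq, hprod.deriv]
    have hadd := W.add_formula hk hw hwk
    rw [hdd]
    have hQQ : W.Qf k w = W.Z (w + k) - W.Z w - W.Z k := rfl
    rw [hQQ]
    linear_combination (-(hermitePsi W k w)) * hadd
  by_cases hzk : z + k ∉ W.lattice
  · exact main z hz hzk
  -- continuity case
  push_neg at hzk
  have han : AnalyticOnNhd ℂ (hermitePsi W k) W.latticeᶜ :=
    (W.psi_diffOn hk).analyticOnNhd W.lat_open_compl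
  have han2 : AnalyticOnNhd ℂ (deriv (deriv (hermitePsi W k))) W.latticeᶜ := han.deriv.deriv
  have hψc : ContinuousAt (hermitePsi W k) z :=
    ((W.psi_diffOn hk).differentiableAt (W.lat_open_compl.mem_nhds hz)).continuousAt
  have hlhs : ContinuousAt (fun w => -deriv (deriv (hermitePsi W k)) w
      + 2 * W.P w * hermitePsi W k w) z := by
    apply ContinuousAt.add
    · exact ((han2 z hz).continuousAt).neg
    · exact (continuousAt_const.mul (W.P_diff z hz).continuousAt).mul hψc
  have hrhs : ContinuousAt (fun w => (-W.P k) * hermitePsi W k w) z :=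
    continuousAt_const.mul hψc
  have hev : ∀ᶠ w in 𝓝[≠] z, (fun w => -deriv (deriv (hermitePsi W k)) w
      + 2 * W.P w * hermitePsi W k w) w = (fun w => (-W.P k) * hermitePsi W k w) w := by
    have e1 : ∀ᶠ w in 𝓝[≠] z, w ∉ W.lattice :=
      Filter.Eventually.filter_mono nhdsWithin_le_nhds
        (W.lat_open_compl.eventually_mem hz)
    have e2 : ∀ᶠ w in 𝓝[≠] z, w + k ∉ W.lattice :=
      (tendsto_add_punctured z k).eventually (W.lat_ev (z + k))
    filter_upwards [e1, e2] with w hw hwk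
    exact main w hw hwk
  have t1 := hlhs.tendsto.mono_left (nhdsWithin_le_nhds : 𝓝[≠] z ≤ 𝓝 z)
  have t2 := (hrhs.tendsto.mono_left (nhdsWithin_le_nhds : 𝓝[≠] z ≤ 𝓝 z)).congr'
    (hev.mono fun w h => h.symm)
  exact tendsto_nhds_unique t1 t2

theorem floquet (hk : k ∉ W.lattice) {ω : ℂ} (hω2 : 2 * ω ∈ W.lattice) (hω : ω ∉ W.lattice)
    {z : ℂ} (hz : z ∉ W.lattice) :
    hermitePsi W k (z + 2 * ω)
      = Complex.exp (2 * W.Z ω * k - 2 * W.Z k * ω) * hermitePsi W k z := by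
  have hη : ∀ x, x ∉ W.lattice → W.Z (x + 2 * ω) = W.Z x + 2 * W.Z ω := by
    intro x hx
    have hmω : -ω ∉ W.lattice := W.not_lat_neg hω
    have h := W.zeta_quasi hω2 (x := x) (y := -ω) hx hmω
    rw [show -ω + 2 * ω = ω by ring, W.Z_odd] at h
    linear_combination h
  obtain ⟨C, hC0, hC⟩ := W.sigma_quasi hω2 hη
  have h1 := hC (z + k)
  have h2 := hC z
  rw [show z + k + 2 * ω = z + 2 * ω + k by ring] at h1
  rw [hermitePsi, hermitePsi, h1, h2]
  have hSz := W.S_ne z hz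
  have hSk := W.S_ne k hk
  have e1 : Complex.exp (2 * W.Z ω * (z + k)) =
      Complex.exp (2 * W.Z ω * z) * Complex.exp (2 * W.Z ω * k) := by
    rw [← Complex.exp_add]; ring_nf
  have e2 : Complex.exp (-W.Z k * (z + 2 * ω)) =
      Complex.exp (-W.Z k * z) * Complex.exp (-(2 * W.Z k * ω)) := by
    rw [← Complex.exp_add]; ring_nf
  have e3 : Complex.exp (2 * W.Z ω * k - 2 * W.Z k * ω) =
      Complex.exp (2 * W.Z ω * k) * Complex.exp (-(2 * W.Z k * ω)) := by
    rw [← Complex.exp_add]; ring_nf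
  rw [e1, e2, e3]
  have hez := Complex.exp_ne_zero (2 * W.Z ω * z)
  field_simp

end PSI
end WeierstrassData

/-- For every `k ∉ 𝓛`, the function
`ψ(z,k) = σ(z+k)/(σ(z)σ(k)) · exp(-ζ(k)z)` solves the `m = 1` Lamé equation
`-ψ'' + 2℘(z)ψ = λψ` with `λ = -℘(k)` away from the lattice, and for every
half-period `ω` it has the Floquet property
`ψ(z+2ω,k) = exp(2ηk - 2ζ(k)ω)ψ(z,k)` with `η = ζ(ω)`. -/
theorem hermitePsi_solves_lame_and_floquet
    (W : WeierstrassData) (k : ℂ) (hk : k ∉ W.lattice) :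
    (∀ z ∉ W.lattice,
      -deriv (deriv (hermitePsi W k)) z + 2 * W.P z * hermitePsi W k z
        = (-W.P k) * hermitePsi W k z) ∧
    (∀ ω : ℂ, 2 * ω ∈ W.lattice → ω ∉ W.lattice → ∀ z ∉ W.lattice,
      hermitePsi W k (z + 2 * ω)
        = Complex.exp (2 * W.Z ω * k - 2 * W.Z k * ω) * hermitePsi W k z) :=
  ⟨fun z hz => W.lame_main hk hz, fun ω hω2 hω z hz => W.floquet hk hω2 hω hz⟩
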